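/- Rational solution over the background u = 1: Let a ∈ ℝ. On the open set where x + 6t + a ≠ 0, define u(x,t) = 1 − 2/(x + 6t + a)² and y(x,t) = 2a/(x + 6t + a)² + 2a. Then (u,y) satisfies both equations of system (Dx) and both equations of system (Dt), and the first integrals take the values H0 = 2y y_xx − y_x² + 4u y² = 16a² and H1 = 2z z_xx − z_x² + 4(u−1)z² = −36, where z = 12tu + 2x + y. -/

import Mathlib

/-- Partial derivative in the first (space) variable. -/
noncomputable def dx (f : ℝ → ℝ → ℝ) : ℝ → ℝ → ℝ := fun x t => deriv (fun x' => f x' t) x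

/-- Partial derivative in the second (time) variable. -/
noncomputable def dt (f : ℝ → ℝ → ℝ) : ℝ → ℝ → ℝ := fun x t => deriv (fun t' => f x t') t

/-- The KdV equation `u_t = u_xxx + 6 u u_x`. -/
def KdV (u : ℝ → ℝ → ℝ) : Prop :=
  ∀ x t, dt u x t = dx (dx (dx u)) x t + 6 * u x t * dx u x t

/-- `v` is the potential of `u`: `v_x = u`, `v_t = u_xx + 3 u²`. -/
def Potential (u v : ℝ → ℝ → ℝ) : Prop :=
  ∀ x t, dx v x t = u x t ∧ dt v x t = dx (dx u) x t + 3 * (u x t) ^ 2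

/-- Equation (eqt): the stationary equation for the linear combination
`u_{τ5} + k1 u_{τ3} + k2 u_{τ1}` of nonautonomous symmetries of KdV. -/
def Eqt (k1 k2 : ℝ) (u v : ℝ → ℝ → ℝ) : Prop :=
  ∀ x t,
    3 * t * dx (fun x t => dx (dx (dx (dx u))) x t + 10 * u x t * dx (dx u) x t
        + 5 * (dx u x t) ^ 2 + 10 * (u x t) ^ 3) x t
    + x * dx (fun x t => dx (dx u) x t + 3 * (u x t) ^ 2) x t
    + 4 * dx (dx u) x t + 8 * (u x t) ^ 2 + 2 * dx u x t * v x t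
    + k1 * (3 * t * dx (fun x t => dx (dx u) x t + 3 * (u x t) ^ 2) x t
        + x * dx u x t + 2 * u x t)
    + k2 * (6 * t * dx u x t + 1) = 0

/-- Pointwise form of system (Dx): the stationary equation and the equation for `y`. -/
def DxEqAt (u y : ℝ → ℝ → ℝ) (x t : ℝ) : Prop :=
  3 * t * (dx (dx (dx u)) x t + 6 * u x t * dx u x t - 4 * dx u x t)
      + x * dx u x t + 2 * u x t - dx y x t - 2 = 0 ∧
  dx (dx (dx y)) x t + 4 * u x t * dx y x t + 2 * dx u x t * y x t = 0

/-- Pointwise form of system (Dt): the KdV flow for `u` and the induced flow for `y`. -/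
def DtEqAt (u y : ℝ → ℝ → ℝ) (x t : ℝ) : Prop :=
  dt u x t = dx (dx (dx u)) x t + 6 * u x t * dx u x t ∧
  dt y x t = 2 * u x t * dx y x t - 2 * dx u x t * y x t

/-- The first integral `H0 = 2 y y_xx - y_x² + 4 u y²`. -/
noncomputable def H0expr (u y : ℝ → ℝ → ℝ) : ℝ → ℝ → ℝ := fun x t =>
  2 * y x t * dx (dx y) x t - (dx y x t) ^ 2 + 4 * u x t * (y x t) ^ 2

/-- The function `z = 12 t u + 2 x + y`. -/
noncomputable def zfun (u y : ℝ → ℝ → ℝ) : ℝ → ℝ → ℝ := fun x t =>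
  12 * t * u x t + 2 * x + y x t

/-- The first integral `H1 = 2 z z_xx - z_x² + 4 (u - 1) z²` with `z = 12 t u + 2 x + y`. -/
noncomputable def H1expr (u y : ℝ → ℝ → ℝ) : ℝ → ℝ → ℝ := fun x t =>
  2 * zfun u y x t * dx (dx (zfun u y)) x t - (dx (zfun u y) x t) ^ 2
    + 4 * (u x t - 1) * (zfun u y x t) ^ 2


lemma hasDerivAt_div_pow {w : ℝ → ℝ} {d t : ℝ} (hw : HasDerivAt w d t)
    (h : w t ≠ 0) (c : ℝ) (n : ℕ) :
    HasDerivAt (fun s => c / (w s) ^ n) (-(n : ℝ) * c * d / (w t) ^ (n + 1)) t := by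
  have h1 : HasDerivAt (fun s => (w s) ^ n) ((n : ℝ) * (w t) ^ (n - 1) * d) t := hw.pow n
  have h2 := (h1.inv (pow_ne_zero n h)).const_mul c
  have h3 : (fun s => c / (w s) ^ n) = fun s => c * ((w s) ^ n)⁻¹ := by
    funext s; rw [div_eq_mul_inv]
  rw [h3]
  refine h2.congr_deriv ?_; symm
  rcases n with _ | m
  · simp
  · simp only [Nat.add_sub_cancel, Nat.cast_add, Nat.cast_one]
    field_simp
    ring

lemma deriv_aff (a t e c m : ℝ) (n : ℕ) (x : ℝ) (h : x + 6 * t + a ≠ 0) :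
    deriv (fun x' => e + m * x' + c / (x' + 6 * t + a) ^ n) x
      = m + -(n : ℝ) * c / (x + 6 * t + a) ^ (n + 1) := by
  have h1 : HasDerivAt (fun x' : ℝ => x' + 6 * t + a) 1 x := by
    simpa using ((hasDerivAt_id x).add_const (6 * t)).add_const a
  have h2 := hasDerivAt_div_pow h1 h c n
  have h3 : HasDerivAt (fun x' : ℝ => e + m * x') m x := by
    simpa using ((hasDerivAt_id x).const_mul m).const_add e
  have := h3.add h2
  simp only [mul_one] at this
  exact this.deriv

lemma deriv_afft (a x e c : ℝ) (n : ℕ) (t : ℝ) (h : x + 6 * t + a ≠ 0) :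
    deriv (fun t' => e + c / (x + 6 * t' + a) ^ n) t
      = -(n : ℝ) * c * 6 / (x + 6 * t + a) ^ (n + 1) := by
  have h1 : HasDerivAt (fun t' : ℝ => x + 6 * t' + a) 6 t := by
    simpa using (((hasDerivAt_id t).const_mul 6).const_add x).add_const a
  have h2 := hasDerivAt_div_pow h1 h c n
  exact (h2.const_add e).deriv

set_option maxHeartbeats 1000000 in
/-- The rational solution over the background `u = 1`:
`u = 1 - 2/(x+6t+a)²`, `y = 2a/(x+6t+a)² + 2a` on the set `x + 6t + a ≠ 0`
solves systems (Dx), (Dt), with `H0 = 16a²` and `H1 = -36`. -/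
theorem rational_solution_background_one (a : ℝ) :
    ∀ x t : ℝ, x + 6 * t + a ≠ 0 →
      DxEqAt (fun x t => 1 - 2 / (x + 6 * t + a) ^ 2)
        (fun x t => 2 * a / (x + 6 * t + a) ^ 2 + 2 * a) x t ∧
      DtEqAt (fun x t => 1 - 2 / (x + 6 * t + a) ^ 2)
        (fun x t => 2 * a / (x + 6 * t + a) ^ 2 + 2 * a) x t ∧
      H0expr (fun x t => 1 - 2 / (x + 6 * t + a) ^ 2)
        (fun x t => 2 * a / (x + 6 * t + a) ^ 2 + 2 * a) x t = 16 * a ^ 2 ∧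
      H1expr (fun x t => 1 - 2 / (x + 6 * t + a) ^ 2)
        (fun x t => 2 * a / (x + 6 * t + a) ^ 2 + 2 * a) x t = -36 := by
  intro x t hs
  set u : ℝ → ℝ → ℝ := fun x t => 1 - 2 / (x + 6 * t + a) ^ 2 with hu
  set y : ℝ → ℝ → ℝ := fun x t => 2 * a / (x + 6 * t + a) ^ 2 + 2 * a with hy
  -- first x-derivatives (pointwise, for all valid points)
  have D1u : ∀ x' : ℝ, x' + 6 * t + a ≠ 0 →
      deriv (fun x'' => u x'' t) x' = 4 / (x' + 6 * t + a) ^ 3 := by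
    intro x' h
    have h1 := deriv_aff a t 1 (-2) 0 2 x' h
    have h2 : (fun x'' : ℝ => 1 + 0 * x'' + (-2) / (x'' + 6 * t + a) ^ 2)
        = (fun x'' => u x'' t) := by funext s; simp only [hu]; ring
    rw [h2] at h1
    rw [h1]; norm_num
  have D1y : ∀ x' : ℝ, x' + 6 * t + a ≠ 0 →
      deriv (fun x'' => y x'' t) x' = -4 * a / (x' + 6 * t + a) ^ 3 := by
    intro x' h
    have h1 := deriv_aff a t (2 * a) (2 * a) 0 2 x' h
    have h2 : (fun x'' : ℝ => 2 * a + 0 * x'' + 2 * a / (x'' + 6 * t + a) ^ 2)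
        = (fun x'' => y x'' t) := by funext s; simp only [hy]; ring
    rw [h2] at h1
    rw [h1]; push_cast; ring
  have D1z : ∀ x' : ℝ, x' + 6 * t + a ≠ 0 →
      deriv (fun x'' => zfun u y x'' t) x'
        = 2 + (48 * t - 4 * a) / (x' + 6 * t + a) ^ 3 := by
    intro x' h
    have h1 := deriv_aff a t (12 * t + 2 * a) (2 * a - 24 * t) 2 2 x' h
    have h2 : (fun x'' : ℝ => 12 * t + 2 * a + 2 * x''
          + (2 * a - 24 * t) / (x'' + 6 * t + a) ^ 2)
        = (fun x'' => zfun u y x'' t) := by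
      funext s; simp only [zfun, hu, hy]; ring
    rw [h2] at h1
    rw [h1]; push_cast; ring
  -- eventual nonvanishing
  have hopen : ∀ x' : ℝ, x' + 6 * t + a ≠ 0 → ∀ᶠ z in nhds x', z + 6 * t + a ≠ 0 := by
    intro x' h
    exact (by fun_prop : ContinuousAt (fun z : ℝ => z + 6 * t + a) x').eventually_ne h
  -- second x-derivatives
  have D2u : ∀ x' : ℝ, x' + 6 * t + a ≠ 0 →
      deriv (fun x'' => deriv (fun x''' => u x''' t) x'') x'
        = -12 / (x' + 6 * t + a) ^ 4 := by
    intro x' h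
    have hev : (fun z => deriv (fun x''' => u x''' t) z)
        =ᶠ[nhds x'] (fun z => 0 + 0 * z + 4 / (z + 6 * t + a) ^ 3) := by
      filter_upwards [hopen x' h] with z hz
      rw [D1u z hz]; ring
    rw [hev.deriv_eq, deriv_aff a t 0 4 0 3 x' h]; push_cast; ring
  have D2y : ∀ x' : ℝ, x' + 6 * t + a ≠ 0 →
      deriv (fun x'' => deriv (fun x''' => y x''' t) x'') x'
        = 12 * a / (x' + 6 * t + a) ^ 4 := by
    intro x' h
    have hev : (fun z => deriv (fun x''' => y x''' t) z)
        =ᶠ[nhds x'] (fun z => 0 + 0 * z + (-4 * a) / (z + 6 * t + a) ^ 3) := by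
      filter_upwards [hopen x' h] with z hz
      rw [D1y z hz]; ring
    rw [hev.deriv_eq, deriv_aff a t 0 (-4 * a) 0 3 x' h]; push_cast; ring
  have D2z : deriv (fun x'' => deriv (fun x''' => zfun u y x''' t) x'') x
      = (12 * a - 144 * t) / (x + 6 * t + a) ^ 4 := by
    have hev : (fun z => deriv (fun x''' => zfun u y x''' t) z)
        =ᶠ[nhds x] (fun z => 2 + 0 * z + (48 * t - 4 * a) / (z + 6 * t + a) ^ 3) := by
      filter_upwards [hopen x hs] with z hz
      rw [D1z z hz]; ring
    rw [hev.deriv_eq, deriv_aff a t 2 (48 * t - 4 * a) 0 3 x hs]; push_cast; ring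
  -- third x-derivatives
  have D3u : deriv (fun x' => deriv (fun x'' => deriv (fun x''' => u x''' t) x'') x') x
      = 48 / (x + 6 * t + a) ^ 5 := by
    have hev : (fun z => deriv (fun x'' => deriv (fun x''' => u x''' t) x'') z)
        =ᶠ[nhds x] (fun z => 0 + 0 * z + (-12) / (z + 6 * t + a) ^ 4) := by
      filter_upwards [hopen x hs] with z hz
      rw [D2u z hz]; ring
    rw [hev.deriv_eq, deriv_aff a t 0 (-12) 0 4 x hs]; push_cast; ring
  have D3y : deriv (fun x' => deriv (fun x'' => deriv (fun x''' => y x''' t) x'') x') x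
      = -48 * a / (x + 6 * t + a) ^ 5 := by
    have hev : (fun z => deriv (fun x'' => deriv (fun x''' => y x''' t) x'') z)
        =ᶠ[nhds x] (fun z => 0 + 0 * z + (12 * a) / (z + 6 * t + a) ^ 4) := by
      filter_upwards [hopen x hs] with z hz
      rw [D2y z hz]; ring
    rw [hev.deriv_eq, deriv_aff a t 0 (12 * a) 0 4 x hs]; push_cast; ring
  -- time derivatives
  have Dtu : deriv (fun t' => u x t') t = 24 / (x + 6 * t + a) ^ 3 := by
    have h2 : (fun t' : ℝ => 1 + (-2) / (x + 6 * t' + a) ^ 2) = (fun t' => u x t') := by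
      funext s; simp only [hu]; ring
    rw [← h2, deriv_afft a x 1 (-2) 2 t hs]; push_cast; ring
  have Dty : deriv (fun t' => y x t') t = -24 * a / (x + 6 * t + a) ^ 3 := by
    have h2 : (fun t' : ℝ => 2 * a + (2 * a) / (x + 6 * t' + a) ^ 2)
        = (fun t' => y x t') := by funext s; simp only [hy]; ring
    rw [← h2, deriv_afft a x (2 * a) (2 * a) 2 t hs]; push_cast; ring
  have huv : u x t = 1 - 2 / (x + 6 * t + a) ^ 2 := by rw [hu]
  have hyv : y x t = 2 * a / (x + 6 * t + a) ^ 2 + 2 * a := by rw [hy]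
  have hzv : zfun u y x t = 12 * t * (1 - 2 / (x + 6 * t + a) ^ 2) + 2 * x
      + (2 * a / (x + 6 * t + a) ^ 2 + 2 * a) := by simp [zfun, hu, hy]
  clear_value u y
  refine ⟨⟨?_, ?_⟩, ⟨?_, ?_⟩, ?_, ?_⟩
  · simp only [dx]
    rw [D3u, D1u x hs, D1y x hs, huv]
    clear hu hy D1u D1y D1z hopen D2u D2y D2z D3u D3y Dtu Dty huv hyv hzv
    generalize hS : x + 6 * t + a = S at *
    have : x = S - 6 * t - a := by linarith
    subst this
    field_simp
    ring
  · simp only [dx]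
    rw [D3y, D1u x hs, D1y x hs, huv, hyv]
    clear hu hy D1u D1y D1z hopen D2u D2y D2z D3u D3y Dtu Dty huv hyv hzv
    field_simp
    ring
  · simp only [dx, dt]
    rw [Dtu, D3u, D1u x hs, huv]
    clear hu hy D1u D1y D1z hopen D2u D2y D2z D3u D3y Dtu Dty huv hyv hzv
    field_simp
    ring
  · simp only [dx, dt]
    rw [Dty, D1u x hs, D1y x hs, huv, hyv]
    clear hu hy D1u D1y D1z hopen D2u D2y D2z D3u D3y Dtu Dty huv hyv hzv
    field_simp
    ring
  · simp only [H0expr, dx]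
    rw [D2y x hs, D1y x hs, huv, hyv]
    clear hu hy D1u D1y D1z hopen D2u D2y D2z D3u D3y Dtu Dty huv hyv hzv
    field_simp
    ring
  · simp only [H1expr, dx]
    rw [D2z, D1z x hs, hzv, huv]
    clear hu hy D1u D1y D1z hopen D2u D2y D2z D3u D3y Dtu Dty huv hyv hzv
    generalize hS : x + 6 * t + a = S at *
    have : x = S - 6 * t - a := by linarith
    subst this
    field_simp
    ring
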